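/- Local variable promotion (SSA renaming) is sound for straight-line code: let P be a straight-line program with a mutable variable x having stores at positions p₁ < p₂ < … < p_m. Construct P' by introducing fresh immutable variables x₁,…,x_m, replacing the i-th 'store x e' with 'x_i := e', and replacing each 'r := load x' with 'r := x_i' where p_i is the greatest store position preceding the load. Then P and P' compute the same values for all immutable result variables. -/

import Mathlib

/-- Mutable variable names. -/
abbrev VName := String
/-- Immutable result variable names. -/
abbrev RName := String

/-- Expressions read only immutable variables. -/
abbrev Expr (V : Type) := (RName → Option V) → Option V

/-- Straight-line instructions over values `V`:
`store x e` stores the value of expression `e` into mutable variable `x`;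
`load r x` sets immutable variable `r` to the contents of `x`;
`assign r e` sets immutable variable `r` to the value of expression `e`. -/
inductive Instr (V : Type) where
  | store (x : VName) (e : Expr V)
  | load (r : RName) (x : VName)
  | assign (r : RName) (e : Expr V)

/-- Program states: a store `σ` and an immutable environment `ρ`. -/
abbrev PState (V : Type) := (VName → Option V) × (RName → Option V)

def stepInstr {V : Type} (st : PState V) : Instr V → PState V
  | .store x e => (Function.update st.1 x (e st.2), st.2)
  | .load r x => (st.1, Function.update st.2 r (st.1 x))
  | .assign r e => (st.1, Function.update st.2 r (e st.2))

/-- Sequential execution of a straight-line program. -/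
def run {V : Type} (P : List (Instr V)) (st : PState V) : PState V :=
  P.foldl stepInstr st

/-- SSA renaming of the mutable variable `x`: the `i`-th store of `x` becomes
an assignment to the fresh immutable variable `fresh i`, and each load of `x`
becomes a copy from the fresh variable of the nearest preceding store.
The counter argument records how many stores of `x` have been seen. -/
def ssa {V : Type} (x : VName) (fresh : ℕ → RName) :
    ℕ → List (Instr V) → List (Instr V)
  | _, [] => []
  | i, .store y e :: rest =>
      if y = x then .assign (fresh (i + 1)) e :: ssa x fresh (i + 1) rest
      else .store y e :: ssa x fresh i rest
  | i, .load r y :: rest =>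
      if y = x then .assign r (fun ρ => ρ (fresh i)) :: ssa x fresh i rest
      else .load r y :: ssa x fresh i rest
  | i, .assign r e :: rest => .assign r e :: ssa x fresh i rest

/-- An expression depends only on non-fresh immutable variables. -/
def ExprAvoids {V : Type} (fresh : ℕ → RName) (e : Expr V) : Prop :=
  ∀ ρ ρ' : RName → Option V,
    (∀ s : RName, (∀ k, s ≠ fresh k) → ρ s = ρ' s) → e ρ = e ρ'

/-- An instruction neither reads nor writes the fresh immutable variables. -/
def InstrAvoids {V : Type} (fresh : ℕ → RName) : Instr V → Prop
  | .store _ e => ExprAvoids fresh e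
  | .load r _ => ∀ k, r ≠ fresh k
  | .assign r e => (∀ k, r ≠ fresh k) ∧ ExprAvoids fresh e

theorem run_cons {V : Type} (a : Instr V) (P : List (Instr V))
    (st : PState V) : run (a :: P) st = run P (stepInstr st a) := rfl

lemma ssa_sim {V : Type} (x : VName) (fresh : ℕ → RName) :
    ∀ (P : List (Instr V)) (i : ℕ) (σ σ' : VName → Option V)
      (ρ ρ' : RName → Option V),
      (∀ ins ∈ P, InstrAvoids fresh ins) →
      (∀ (Q : List (Instr V)) (r : RName) (R : List (Instr V)),
        P = Q ++ Instr.load r x :: R →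
          (∃ e : Expr V, Instr.store x e ∈ Q) ∨ ρ' (fresh i) = σ x) →
      (∀ y, y ≠ x → σ' y = σ y) →
      (∀ s, (∀ k, s ≠ fresh k) → ρ' s = ρ s) →
      ∀ s, (∀ k, s ≠ fresh k) →
        (run P (σ, ρ)).2 s = (run (ssa x fresh i P) (σ', ρ')).2 s := by
  intro P
  induction P with
  | nil =>
    intro i σ σ' ρ ρ' _ _ _ hρ s hs
    simpa [run, ssa] using (hρ s hs).symm
  | cons a P ih =>
    intro i σ σ' ρ ρ' havoid hload hσ hρ s hs
    have havoid' : ∀ ins ∈ P, InstrAvoids fresh ins := fun ins h =>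
      havoid ins (List.mem_cons_of_mem _ h)
    have ha : InstrAvoids fresh a := havoid a List.mem_cons_self
    cases a with
    | store y e =>
      have he : e ρ' = e ρ := ha ρ' ρ (fun t ht => hρ t ht)
      by_cases hy : y = x
      · subst hy
        have hssa : ssa y fresh i (Instr.store y e :: P)
            = Instr.assign (fresh (i+1)) e :: ssa y fresh (i+1) P := by
          simp [ssa]
        rw [hssa, run_cons, run_cons]
        refine ih (i+1) (Function.update σ y (e ρ)) σ' ρ
          (Function.update ρ' (fresh (i+1)) (e ρ')) havoid' ?_ ?_ ?_ s hs
        · intro Q r R hPQ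
          right
          simp [Function.update, he]
        · intro z hz
          rw [Function.update_of_ne hz, hσ z hz]
        · intro t ht
          rw [Function.update_of_ne (ht (i+1)), hρ t ht]
      · have hssa : ssa x fresh i (Instr.store y e :: P)
            = Instr.store y e :: ssa x fresh i P := by
          simp [ssa, hy]
        rw [hssa, run_cons, run_cons]
        refine ih i (Function.update σ y (e ρ))
          (Function.update σ' y (e ρ')) ρ ρ' havoid' ?_ ?_ hρ s hs
        · intro Q r R hPQ
          rcases hload (Instr.store y e :: Q) r R (by rw [hPQ]; rfl) with
            ⟨e', he'⟩ | h
          · rcases List.mem_cons.1 he' with h1 | h1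
            · injection h1 with h _; exact absurd h.symm hy
            · exact Or.inl ⟨e', h1⟩
          · right
            rw [Function.update_of_ne (Ne.symm hy)]
            exact h
        · intro z hz
          by_cases hzy : z = y
          · subst hzy; simp [he]
          · rw [Function.update_of_ne hzy, Function.update_of_ne hzy,
              hσ z hz]
    | load r y =>
      have hr : ∀ k, r ≠ fresh k := ha
      by_cases hy : y = x
      · subst hy
        have hσx : ρ' (fresh i) = σ y := by
          rcases hload [] r P rfl with ⟨e, he⟩ | h
          · simp at he
          · exact h
        have hssa : ssa y fresh i (Instr.load r y :: P)
            = Instr.assign r (fun ρ => ρ (fresh i)) :: ssa y fresh i P := by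
          simp [ssa]
        rw [hssa, run_cons, run_cons]
        refine ih i σ σ' (Function.update ρ r (σ y))
          (Function.update ρ' r (ρ' (fresh i))) havoid' ?_ hσ ?_ s hs
        · intro Q r' R hPQ
          rcases hload (Instr.load r y :: Q) r' R (by rw [hPQ]; rfl) with
            ⟨e', he'⟩ | h
          · rcases List.mem_cons.1 he' with h1 | h1
            · exact absurd h1 (by simp)
            · exact Or.inl ⟨e', h1⟩
          · right; rwa [Function.update_of_ne (Ne.symm (hr i))]
        · intro t ht
          by_cases htr : t = r
          · subst htr; simp [hσx]
          · rw [Function.update_of_ne htr, Function.update_of_ne htr,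
              hρ t ht]
      · have hssa : ssa x fresh i (Instr.load r y :: P)
            = Instr.load r y :: ssa x fresh i P := by
          simp [ssa, hy]
        rw [hssa, run_cons, run_cons]
        refine ih i σ σ' (Function.update ρ r (σ y))
          (Function.update ρ' r (σ' y)) havoid' ?_ hσ ?_ s hs
        · intro Q r' R hPQ
          rcases hload (Instr.load r y :: Q) r' R (by rw [hPQ]; rfl) with
            ⟨e', he'⟩ | h
          · rcases List.mem_cons.1 he' with h1 | h1
            · exact absurd h1 (by simp)
            · exact Or.inl ⟨e', h1⟩
          · right; rwa [Function.update_of_ne (Ne.symm (hr i))]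
        · intro t ht
          by_cases htr : t = r
          · subst htr; simp [hσ y hy]
          · rw [Function.update_of_ne htr, Function.update_of_ne htr,
              hρ t ht]
    | assign r e =>
      obtain ⟨hr, hee⟩ := ha
      have he : e ρ' = e ρ := hee ρ' ρ (fun t ht => hρ t ht)
      have hssa : ssa x fresh i (Instr.assign r e :: P)
          = Instr.assign r e :: ssa x fresh i P := by simp [ssa]
      rw [hssa, run_cons, run_cons]
      refine ih i σ σ' (Function.update ρ r (e ρ))
        (Function.update ρ' r (e ρ')) havoid' ?_ hσ ?_ s hs
      · intro Q r' R hPQ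
        rcases hload (Instr.assign r e :: Q) r' R (by rw [hPQ]; rfl) with
          ⟨e', he'⟩ | h
        · rcases List.mem_cons.1 he' with h1 | h1
          · exact absurd h1 (by simp)
          · exact Or.inl ⟨e', h1⟩
        · right; rwa [Function.update_of_ne (Ne.symm (hr i))]
      · intro t ht
        by_cases htr : t = r
        · subst htr; simp [he]
        · rw [Function.update_of_ne htr, Function.update_of_ne htr,
            hρ t ht]

/-- local variable promotion (SSA renaming) is sound for
straight-line code: if every load of `x` in `P` is preceded by at least one
store of `x`, and the variables `fresh 0, fresh 1, …` are indeed fresh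
(pairwise distinct and unused by `P`), then `P` and its SSA renaming compute
the same values for all (original) immutable result variables. -/
theorem local_variable_promotion_sound {V : Type} (x : VName)
    (fresh : ℕ → RName) (hinj : Function.Injective fresh)
    (P : List (Instr V))
    (havoid : ∀ ins ∈ P, InstrAvoids fresh ins)
    (hwf : ∀ (Q : List (Instr V)) (r : RName) (R : List (Instr V)),
      P = Q ++ Instr.load r x :: R → ∃ e : Expr V, Instr.store x e ∈ Q)
    (σ : VName → Option V) (ρ : RName → Option V) :
    ∀ s : RName, (∀ k, s ≠ fresh k) →
      (run P (σ, ρ)).2 s = (run (ssa x fresh 0 P) (σ, ρ)).2 s := by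
  intro s hs
  refine ssa_sim x fresh P 0 σ σ ρ ρ havoid ?_ (fun _ _ => rfl)
    (fun _ _ => rfl) s hs
  intro Q r R hPQ
  exact Or.inl (hwf Q r R hPQ)
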